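/- Monotonicity and vanishing limit of the soliton energy: For c > 1 define the soliton energy E(c) := Σ_{n∈ℤ} ( ½ p̃_c(n)² + V(r̃_c(n)) ), where V(r) = e^{−r} − 1 + r. Then the sum defining E(c) converges for every c > 1, the function c ↦ E(c) is strictly increasing on (1,∞) with dE(c)/dc > 0, and lim_{c→1⁺} E(c) = 0. -/

import Mathlib

open Real Filter Set MeasureTheory

namespace TodaPaper

noncomputable section

/-- The squared Euclidean norm on `ℝ × ℝ`. -/
def nsq (w : ℝ × ℝ) : ℝ := w.1 ^ 2 + w.2 ^ 2

/-- Membership in `ℓ²(ℤ; ℝ²)`. -/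
def Meml2 (u : ℤ → ℝ × ℝ) : Prop := Summable fun n : ℤ => nsq (u n)

/-- The `ℓ²(ℤ; ℝ²)` norm. -/
def l2norm (u : ℤ → ℝ × ℝ) : ℝ := Real.sqrt (∑' n : ℤ, nsq (u n))

/-- Membership in the exponentially weighted space `ℓ²_a`. -/
def Meml2w (a : ℝ) (u : ℤ → ℝ × ℝ) : Prop :=
  Summable fun n : ℤ => Real.exp (2 * a * n) * nsq (u n)

/-- The `ℓ²_a` norm. -/
def wnorm (a : ℝ) (u : ℤ → ℝ × ℝ) : ℝ :=
  Real.sqrt (∑' n : ℤ, Real.exp (2 * a * n) * nsq (u n))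

/-- The Toda potential `V(r) = e^{-r} - 1 + r`. -/
def V (r : ℝ) : ℝ := Real.exp (-r) - 1 + r

/-- Derivative of the Toda potential, `V'(r) = 1 - e^{-r}`. -/
def V' (r : ℝ) : ℝ := 1 - Real.exp (-r)

/-- `u = (r, p)` is a solution of the Toda lattice. -/
structure IsTodaSolution (u : ℝ → ℤ → ℝ × ℝ) : Prop where
  mem : ∀ t, Meml2 (u t)
  dr : ∀ t n, HasDerivAt (fun s => (u s n).1) ((u t (n + 1)).2 - (u t n).2) t
  dp : ∀ t n, HasDerivAt (fun s => (u s n).2) (V' (u t n).1 - V' (u t (n - 1)).1) t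

/-- The decay rate `κ(c)`, the (unique, for `c > 1`) positive root of `sinh κ = c κ`. -/
def kappa (c : ℝ) : ℝ := Classical.epsilon fun k : ℝ => 0 < k ∧ Real.sinh k = c * k

/-- The soliton displacement profile `q̃_c`. -/
def qt (c x : ℝ) : ℝ := Real.log (Real.cosh (kappa c * (x - 1)) / Real.cosh (kappa c * x))

/-- The soliton momentum profile `p̃_c = -c q̃_c'`. -/
def ptil (c : ℝ) : ℝ → ℝ := fun x => -c * deriv (qt c) x

/-- The soliton relative-displacement profile `r̃_c(x) = q̃_c(x+1) - q̃_c(x)`. -/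
def rtil (c : ℝ) : ℝ → ℝ := fun x => qt c (x + 1) - qt c x

/-- The soliton profile `ũ_c = (r̃_c, p̃_c)`. -/
def solProfile (c : ℝ) (x : ℝ) : ℝ × ℝ := (rtil c x, ptil c x)

/-- The soliton `u_c(γ)(n) = ũ_c(n - cγ)`. -/
def uc (c γ : ℝ) : ℤ → ℝ × ℝ := fun n => solProfile c ((n : ℝ) - c * γ)

/-- The neutral mode `u̇_c(γ)(n) = -c ũ_c'(n - cγ)`. -/
def ucDot (c γ : ℝ) : ℤ → ℝ × ℝ := fun n => (-c) • deriv (solProfile c) ((n : ℝ) - c * γ)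

/-- The neutral mode `∂_c u_c(γ)(n)`. -/
def ucDc (c γ : ℝ) : ℤ → ℝ × ℝ := fun n => deriv (fun c' => solProfile c' ((n : ℝ) - c' * γ)) c

/-- The `ℓ²` pairing `⟨u, v⟩ = Σ_n (u₁ v₁ + u₂ v₂)`. -/
def pairing (u v : ℤ → ℝ × ℝ) : ℝ := ∑' n : ℤ, ((u n).1 * (v n).1 + (u n).2 * (v n).2)

/-- The operator `J⁻¹ : (r,p) ↦ (Σ_{k=0}^∞ p(·-k), Σ_{k=1}^∞ r(·-k))`. -/
def Jinv (u : ℤ → ℝ × ℝ) : ℤ → ℝ × ℝ := fun n =>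
  (∑' k : ℕ, (u (n - (k : ℤ))).2, ∑' k : ℕ, (u (n - 1 - (k : ℤ))).1)

/-- The soliton energy `E(c) = Σ_n (½ p̃_c(n)² + V(r̃_c(n)))`. -/
def solEnergy (c : ℝ) : ℝ := ∑' n : ℤ, ((ptil c n) ^ 2 / 2 + V (rtil c n))


/-! ### Auxiliary lemmas for Statement 16 -/

private lemma cosh_ne (x : ℝ) : Real.cosh x ≠ 0 := (Real.cosh_pos x).ne'

private lemma sinh_lt_mul_cosh {k : ℝ} (hk : 0 < k) : Real.sinh k < k * Real.cosh k := by
  have h : StrictMonoOn (fun x : ℝ => x * Real.cosh x - Real.sinh x) (Set.Ici 0) := by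
    apply strictMonoOn_of_deriv_pos (convex_Ici 0)
    · exact ((continuous_id.mul Real.continuous_cosh).sub Real.continuous_sinh).continuousOn
    · intro x hx
      rw [interior_Ici] at hx
      have hd : HasDerivAt (fun x : ℝ => x * Real.cosh x - Real.sinh x) (x * Real.sinh x) x := by
        have := ((hasDerivAt_id x).fun_mul (Real.hasDerivAt_cosh x)).fun_sub (Real.hasDerivAt_sinh x)
        convert this using 1 <;> try rfl
        simp only [id_eq]
        ring
      rw [hd.deriv]
      exact mul_pos hx (Real.sinh_pos_iff.mpr hx)
  have h0 := h (Set.self_mem_Ici) (Set.mem_Ici.mpr hk.le) hk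
  simpa using h0

/-- `φ(k) = sinh k / k`. -/
private def phiT (k : ℝ) : ℝ := Real.sinh k / k

private lemma phiT_hasDerivAt {k : ℝ} (hk : 0 < k) :
    HasDerivAt phiT ((Real.cosh k * k - Real.sinh k) / k ^ 2) k := by
  have := (Real.hasDerivAt_sinh k).fun_div (hasDerivAt_id k) hk.ne'
  exact (by simpa using this : HasDerivAt (fun k => Real.sinh k / k) _ k)

private lemma phiT_strictMonoOn : StrictMonoOn phiT (Set.Ioi 0) := by
  apply strictMonoOn_of_deriv_pos (convex_Ioi 0)
  · intro x hx
    exact (Real.continuous_sinh.continuousAt.div continuousAt_id (ne_of_gt hx)).continuousWithinAt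
  · intro x hx
    rw [interior_Ioi] at hx
    rw [(phiT_hasDerivAt hx).deriv]
    have h1 := sinh_lt_mul_cosh hx
    have h2 : (0:ℝ) < x ^ 2 := pow_pos hx 2
    apply div_pos _ h2
    nlinarith

private lemma one_lt_phiT {k : ℝ} (hk : 0 < k) : 1 < phiT k := by
  rw [phiT, lt_div_iff₀ hk]
  simpa using Real.self_lt_sinh_iff.mpr hk

private lemma kappa_spec {c : ℝ} (hc : 1 < c) :
    0 < kappa c ∧ Real.sinh (kappa c) = c * kappa c := by
  have hex : ∃ k : ℝ, 0 < k ∧ Real.sinh k = c * k := by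
    -- small point where sinh k < c k
    have hslope : Tendsto (fun k : ℝ => Real.sinh k / k) (nhdsWithin 0 (Set.Ioi 0)) (nhds 1) := by
      have h := Real.hasDerivAt_sinh 0
      rw [hasDerivAt_iff_tendsto_slope] at h
      rw [Real.cosh_zero] at h
      have h2 := h.mono_left (nhdsWithin_mono 0 (fun x hx => ne_of_gt hx))
      refine h2.congr' ?_
      filter_upwards [self_mem_nhdsWithin] with x hx
      simp [slope_def_field]
    have hev : ∀ᶠ k in nhdsWithin 0 (Set.Ioi (0:ℝ)),
        Real.sinh k / k < c ∧ k ∈ Set.Ioo (0:ℝ) 1 := by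
      filter_upwards [hslope.eventually_lt_const hc,
        Ioo_mem_nhdsGT one_pos] with k h1 h2
      exact ⟨h1, h2⟩
    obtain ⟨k0, hk0lt, hk0mem⟩ := hev.exists
    have hk0pos : 0 < k0 := hk0mem.1
    have hsmall : Real.sinh k0 < c * k0 := by
      rw [div_lt_iff₀ hk0pos] at hk0lt
      linarith
    -- large point where sinh K > c K
    set K := 8 * c with hK
    have hKpos : (0:ℝ) < K := by rw [hK]; linarith
    have hbig : c * K < Real.sinh K := by
      have h1 : K / 2 + 1 ≤ Real.exp (K / 2) := Real.add_one_le_exp (K / 2)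
      have h2 : Real.exp K = Real.exp (K / 2) ^ 2 := by
        rw [sq, ← Real.exp_add]; ring_nf
      have h3 : Real.exp (-K) ≤ 1 := Real.exp_le_one_iff.mpr (by linarith)
      have h4 : Real.sinh K = (Real.exp K - Real.exp (-K)) / 2 := Real.sinh_eq K
      have h5 : (0:ℝ) < Real.exp (K / 2) := Real.exp_pos _
      nlinarith
    have hk0K : k0 ≤ K := by
      have := hk0mem.2
      linarith
    have hcont : ContinuousOn (fun k : ℝ => Real.sinh k - c * k) (Set.Icc k0 K) :=
      (Real.continuous_sinh.sub (continuous_const.mul continuous_id)).continuousOn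
    have h0mem : (0:ℝ) ∈ Set.Icc (Real.sinh k0 - c * k0) (Real.sinh K - c * K) :=
      ⟨by linarith, by linarith⟩
    obtain ⟨k, hkmem, hkeq⟩ := intermediate_value_Icc hk0K hcont h0mem
    have hkeq' : Real.sinh k - c * k = 0 := hkeq
    exact ⟨k, lt_of_lt_of_le hk0pos hkmem.1, by linarith⟩
  exact Classical.epsilon_spec hex

private lemma phiT_kappa {c : ℝ} (hc : 1 < c) : phiT (kappa c) = c := by
  obtain ⟨h1, h2⟩ := kappa_spec hc
  rw [phiT, h2]
  field_simp

private lemma kappa_lt_kappa {c₁ c₂ : ℝ} (h1 : 1 < c₁) (hlt : c₁ < c₂) :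
    kappa c₁ < kappa c₂ := by
  obtain ⟨p1, _⟩ := kappa_spec h1
  obtain ⟨p2, _⟩ := kappa_spec (h1.trans hlt)
  by_contra h
  push_neg at h
  have hle : phiT (kappa c₂) ≤ phiT (kappa c₁) := by
    rcases eq_or_lt_of_le h with h' | h'
    · rw [h']
    · exact (phiT_strictMonoOn p2 p1 h').le
  rw [phiT_kappa h1, phiT_kappa (h1.trans hlt)] at hle
  linarith

private lemma qt_eq (c x : ℝ) :
    qt c x = Real.log (Real.cosh (kappa c * (x - 1))) - Real.log (Real.cosh (kappa c * x)) := by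
  rw [qt, Real.log_div (cosh_ne _) (cosh_ne _)]

private lemma hasDerivAt_qt (c x : ℝ) :
    HasDerivAt (qt c)
      (kappa c * Real.tanh (kappa c * (x - 1)) - kappa c * Real.tanh (kappa c * x)) x := by
  set K := kappa c
  have h1 : HasDerivAt (fun y : ℝ => K * (y - 1)) K x := by
    simpa using ((hasDerivAt_id x).sub_const 1).const_mul K
  have h2 : HasDerivAt (fun y : ℝ => K * y) K x := by
    simpa using (hasDerivAt_id x).const_mul K
  have h3 : HasDerivAt (fun y : ℝ => Real.log (Real.cosh (K * (y - 1))))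
      (Real.sinh (K * (x - 1)) * K / Real.cosh (K * (x - 1))) x :=
    (((Real.hasDerivAt_cosh _).comp x h1).log (cosh_ne _))
  have h4 : HasDerivAt (fun y : ℝ => Real.log (Real.cosh (K * y)))
      (Real.sinh (K * x) * K / Real.cosh (K * x)) x :=
    (((Real.hasDerivAt_cosh _).comp x h2).log (cosh_ne _))
  have h5 := h3.sub h4
  have heq : qt c = fun y : ℝ =>
      Real.log (Real.cosh (K * (y - 1))) - Real.log (Real.cosh (K * y)) :=
    funext fun y => qt_eq c y
  rw [heq]
  convert h5 using 1 <;> try rfl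
  rw [Real.tanh_eq_sinh_div_cosh, Real.tanh_eq_sinh_div_cosh]
  ring

private lemma ptil_eq {c : ℝ} (hc : 1 < c) (x : ℝ) :
    ptil c x = Real.sinh (kappa c) *
      (Real.tanh (kappa c * x) - Real.tanh (kappa c * (x - 1))) := by
  obtain ⟨hk, hsk⟩ := kappa_spec hc
  rw [ptil]
  rw [(hasDerivAt_qt c x).deriv, hsk]
  ring

private lemma tanh_sub_tanh (a b : ℝ) :
    Real.tanh a - Real.tanh b = Real.sinh (a - b) / (Real.cosh a * Real.cosh b) := by
  rw [Real.tanh_eq_sinh_div_cosh, Real.tanh_eq_sinh_div_cosh, Real.sinh_sub]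
  field_simp

private lemma one_sub_tanh_mul_tanh (a b : ℝ) :
    1 - Real.tanh a * Real.tanh b = Real.cosh (a - b) / (Real.cosh a * Real.cosh b) := by
  rw [Real.tanh_eq_sinh_div_cosh, Real.tanh_eq_sinh_div_cosh, Real.cosh_sub]
  field_simp

private lemma exp_neg_rtil (c x : ℝ) :
    Real.exp (-(rtil c x)) = 1 + Real.sinh (kappa c) ^ 2 * (1 - Real.tanh (kappa c * x) ^ 2) := by
  set K := kappa c
  have h : -(rtil c x) = Real.log (Real.cosh (K * (x + 1)) * Real.cosh (K * (x - 1)) /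
      Real.cosh (K * x) ^ 2) := by
    rw [rtil, qt_eq, qt_eq]
    rw [Real.log_div (by positivity) (by positivity), Real.log_mul (cosh_ne _) (cosh_ne _),
      Real.log_pow]
    have hx1 : K * (x + 1 - 1) = K * x := by ring
    rw [hx1]
    push_cast
    ring
  rw [h, Real.exp_log (by positivity)]
  have e1 : K * (x + 1) = K * x + K := by ring
  have e2 : K * (x - 1) = K * x - K := by ring
  rw [e1, e2, Real.cosh_add, Real.cosh_sub, Real.tanh_eq_sinh_div_cosh]
  have hC := cosh_ne (K * x)
  have hsq := Real.cosh_sq_sub_sinh_sq (K * x)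
  field_simp
  linear_combination (Real.cosh (K * x) ^ 2) * Real.cosh_sq K

/-- The telescoping potential. -/
private def PhiT (c : ℝ) (x : ℝ) : ℝ :=
  Real.sinh (kappa c) * Real.cosh (kappa c) * Real.tanh (kappa c * x)
  + Real.sinh (kappa c) ^ 2 / 2 * (1 - Real.tanh (kappa c * x) ^ 2) + qt c (x + 1)

private lemma summand_eq {c : ℝ} (hc : 1 < c) (x : ℝ) :
    (ptil c x) ^ 2 / 2 + V (rtil c x) = PhiT c x - PhiT c (x - 1) := by
  obtain ⟨hk, hsk⟩ := kappa_spec hc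
  set K := kappa c
  have hkey : Real.sinh K * (1 - Real.tanh (K * x) * Real.tanh (K * (x - 1)))
      = Real.cosh K * (Real.tanh (K * x) - Real.tanh (K * (x - 1))) := by
    rw [tanh_sub_tanh, one_sub_tanh_mul_tanh]
    have h1 : K * x - K * (x - 1) = K := by ring
    rw [h1]
    ring
  have hx1 : x - 1 + 1 = x := by ring
  rw [V, ptil_eq hc, exp_neg_rtil, rtil]
  simp only [PhiT, hx1]
  set u := Real.tanh (K * (x - 1))
  set v := Real.tanh (K * x)
  linear_combination (Real.sinh K) * hkey

private lemma summand_nonneg (c x : ℝ) :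
    0 ≤ (ptil c x) ^ 2 / 2 + V (rtil c x) := by
  have h1 := Real.add_one_le_exp (-(rtil c x))
  have h2 : 0 ≤ V (rtil c x) := by rw [V]; linarith
  have h3 : 0 ≤ (ptil c x) ^ 2 / 2 := by positivity
  linarith

private lemma tanh_rep (x : ℝ) :
    Real.tanh x = 1 - 2 * Real.exp (-x) / (Real.exp x + Real.exp (-x)) := by
  rw [Real.tanh_eq_sinh_div_cosh, Real.sinh_eq, Real.cosh_eq]
  have h : Real.exp x + Real.exp (-x) ≠ 0 := by positivity
  field_simp
  ring

private lemma tendsto_tanh_atTop : Tendsto Real.tanh atTop (nhds 1) := by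
  have h1 : Tendsto (fun x : ℝ => 2 * Real.exp (-x) / (Real.exp x + Real.exp (-x)))
      atTop (nhds 0) := by
    apply Filter.Tendsto.div_atTop (a := (0:ℝ))
    · simpa using Real.tendsto_exp_neg_atTop_nhds_zero.const_mul 2
    · exact tendsto_atTop_mono (fun x => le_add_of_nonneg_right (Real.exp_pos (-x)).le)
        Real.tendsto_exp_atTop
  have h2 := (tendsto_const_nhds (α := ℝ) (x := (1:ℝ)) (f := atTop)).sub h1
  rw [sub_zero] at h2
  exact h2.congr fun x => (tanh_rep x).symm

private lemma tendsto_tanh_atBot : Tendsto Real.tanh atBot (nhds (-1)) := by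
  have h := (tendsto_tanh_atTop.comp tendsto_neg_atBot_atTop).neg
  refine h.congr fun x => ?_
  simp [Function.comp, Real.tanh_neg]

private lemma qt_rep_top {c : ℝ} (hc : 1 < c) (x : ℝ) :
    qt c x = Real.log ((Real.exp (-(kappa c)) + Real.exp (kappa c) * Real.exp (-(kappa c * x)) ^ 2)
      / (1 + Real.exp (-(kappa c * x)) ^ 2)) := by
  set K := kappa c
  rw [qt]
  congr 1
  rw [Real.cosh_eq, Real.cosh_eq]
  have hAB : Real.exp (K * x) * Real.exp (-(K * x)) = 1 := by
    rw [← Real.exp_add]; simp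
  have e1 : Real.exp (K * (x - 1)) = Real.exp (K * x) * Real.exp (-K) := by
    rw [← Real.exp_add]; ring_nf
  have e2 : Real.exp (-(K * (x - 1))) = Real.exp (-(K * x)) * Real.exp K := by
    rw [← Real.exp_add]; ring_nf
  rw [e1, e2]
  have hpos1 : (0:ℝ) < Real.exp (K * x) + Real.exp (-(K * x)) := by positivity
  have hpos2 : (0:ℝ) < 1 + Real.exp (-(K * x)) ^ 2 := by positivity
  field_simp
  rw [show x * kappa c = K * x from mul_comm _ _]
  linear_combination (Real.exp (-(K * x)) * (Real.exp (-K) - Real.exp K)) * hAB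

private lemma qt_rep_bot {c : ℝ} (hc : 1 < c) (x : ℝ) :
    qt c x = Real.log ((Real.exp (-(kappa c)) * Real.exp (kappa c * x) ^ 2 + Real.exp (kappa c))
      / (Real.exp (kappa c * x) ^ 2 + 1)) := by
  set K := kappa c
  rw [qt]
  congr 1
  rw [Real.cosh_eq, Real.cosh_eq]
  have hAB : Real.exp (K * x) * Real.exp (-(K * x)) = 1 := by
    rw [← Real.exp_add]; simp
  have e1 : Real.exp (K * (x - 1)) = Real.exp (K * x) * Real.exp (-K) := by
    rw [← Real.exp_add]; ring_nf
  have e2 : Real.exp (-(K * (x - 1))) = Real.exp (-(K * x)) * Real.exp K := by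
    rw [← Real.exp_add]; ring_nf
  rw [e1, e2]
  have hpos1 : (0:ℝ) < Real.exp (K * x) + Real.exp (-(K * x)) := by positivity
  have hpos2 : (0:ℝ) < Real.exp (K * x) ^ 2 + 1 := by positivity
  field_simp
  rw [show x * kappa c = K * x from mul_comm _ _]
  linear_combination (Real.exp (K * x) * (Real.exp K - Real.exp (-K))) * hAB

private lemma tendsto_qt_atTop {c : ℝ} (hc : 1 < c) :
    Tendsto (qt c) atTop (nhds (-(kappa c))) := by
  obtain ⟨hk, _⟩ := kappa_spec hc
  set K := kappa c
  have hmul : Tendsto (fun x : ℝ => K * x) atTop atTop :=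
    Tendsto.const_mul_atTop hk tendsto_id
  have hB : Tendsto (fun x : ℝ => Real.exp (-(K * x))) atTop (nhds 0) :=
    Real.tendsto_exp_neg_atTop_nhds_zero.comp hmul
  have hB2 : Tendsto (fun x : ℝ => Real.exp (-(K * x)) ^ 2) atTop (nhds 0) := by
    have := hB.pow 2
    simpa using this
  have hnum : Tendsto (fun x : ℝ => Real.exp (-K) + Real.exp K * Real.exp (-(K * x)) ^ 2)
      atTop (nhds (Real.exp (-K))) := by
    have := (tendsto_const_nhds (x := Real.exp (-K)) (f := atTop (α := ℝ))).add
      ((tendsto_const_nhds (x := Real.exp K) (f := atTop (α := ℝ))).mul hB2)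
    simpa using this
  have hden : Tendsto (fun x : ℝ => 1 + Real.exp (-(K * x)) ^ 2) atTop (nhds 1) := by
    have := (tendsto_const_nhds (x := (1:ℝ)) (f := atTop (α := ℝ))).add hB2
    simpa using this
  have hdiv := hnum.div hden one_ne_zero
  rw [div_one] at hdiv
  have hlog := (Real.continuousAt_log (Real.exp_ne_zero _)).tendsto.comp hdiv
  rw [Real.log_exp] at hlog
  exact hlog.congr fun x => (qt_rep_top hc x).symm

private lemma tendsto_qt_atBot {c : ℝ} (hc : 1 < c) :
    Tendsto (qt c) atBot (nhds (kappa c)) := by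
  obtain ⟨hk, _⟩ := kappa_spec hc
  set K := kappa c
  have hmul : Tendsto (fun x : ℝ => K * x) atBot atBot :=
    Tendsto.const_mul_atBot hk tendsto_id
  have hA : Tendsto (fun x : ℝ => Real.exp (K * x)) atBot (nhds 0) := by
    have := Real.tendsto_exp_neg_atTop_nhds_zero.comp
      (tendsto_neg_atBot_atTop.comp hmul)
    refine this.congr fun x => ?_
    simp [Function.comp]
  have hA2 : Tendsto (fun x : ℝ => Real.exp (K * x) ^ 2) atBot (nhds 0) := by
    have := hA.pow 2
    simpa using this
  have hnum : Tendsto (fun x : ℝ => Real.exp (-K) * Real.exp (K * x) ^ 2 + Real.exp K)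
      atBot (nhds (Real.exp K)) := by
    have := ((tendsto_const_nhds (x := Real.exp (-K)) (f := atBot (α := ℝ))).mul hA2).add
      (tendsto_const_nhds (x := Real.exp K) (f := atBot (α := ℝ)))
    simpa using this
  have hden : Tendsto (fun x : ℝ => Real.exp (K * x) ^ 2 + 1) atBot (nhds 1) := by
    have := hA2.add (tendsto_const_nhds (x := (1:ℝ)) (f := atBot (α := ℝ)))
    simpa using this
  have hdiv := hnum.div hden one_ne_zero
  rw [div_one] at hdiv
  have hlog := (Real.continuousAt_log (Real.exp_ne_zero _)).tendsto.comp hdiv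
  rw [Real.log_exp] at hlog
  exact hlog.congr fun x => (qt_rep_bot hc x).symm

private lemma tendsto_PhiT_atTop {c : ℝ} (hc : 1 < c) :
    Tendsto (PhiT c) atTop
      (nhds (Real.sinh (kappa c) * Real.cosh (kappa c) - kappa c)) := by
  obtain ⟨hk, _⟩ := kappa_spec hc
  set K := kappa c
  have hmul : Tendsto (fun x : ℝ => K * x) atTop atTop :=
    Tendsto.const_mul_atTop hk tendsto_id
  have htanh : Tendsto (fun x : ℝ => Real.tanh (K * x)) atTop (nhds 1) :=
    tendsto_tanh_atTop.comp hmul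
  have hq : Tendsto (fun x : ℝ => qt c (x + 1)) atTop (nhds (-K)) :=
    (tendsto_qt_atTop hc).comp (tendsto_atTop_add_const_right atTop 1 tendsto_id)
  have h1 : Tendsto (fun x : ℝ => Real.sinh K * Real.cosh K * Real.tanh (K * x)) atTop
      (nhds (Real.sinh K * Real.cosh K)) := by
    have := htanh.const_mul (Real.sinh K * Real.cosh K)
    simpa using this
  have h2 : Tendsto (fun x : ℝ => Real.sinh K ^ 2 / 2 * (1 - Real.tanh (K * x) ^ 2)) atTop
      (nhds 0) := by
    have h3 : Tendsto (fun x : ℝ => 1 - Real.tanh (K * x) ^ 2) atTop (nhds 0) := by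
      have := (tendsto_const_nhds (x := (1:ℝ)) (f := atTop (α := ℝ))).sub (htanh.pow 2)
      simpa using this
    have := h3.const_mul (Real.sinh K ^ 2 / 2)
    simpa using this
  have := (h1.add h2).add hq
  rw [add_zero] at this
  exact this.congr fun x => by rw [PhiT]

private lemma tendsto_PhiT_atBot {c : ℝ} (hc : 1 < c) :
    Tendsto (PhiT c) atBot
      (nhds (-(Real.sinh (kappa c) * Real.cosh (kappa c)) + kappa c)) := by
  obtain ⟨hk, _⟩ := kappa_spec hc
  set K := kappa c
  have hmul : Tendsto (fun x : ℝ => K * x) atBot atBot :=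
    Tendsto.const_mul_atBot hk tendsto_id
  have htanh : Tendsto (fun x : ℝ => Real.tanh (K * x)) atBot (nhds (-1)) :=
    tendsto_tanh_atBot.comp hmul
  have hq : Tendsto (fun x : ℝ => qt c (x + 1)) atBot (nhds K) :=
    (tendsto_qt_atBot hc).comp (tendsto_atBot_add_const_right atBot 1 tendsto_id)
  have h1 : Tendsto (fun x : ℝ => Real.sinh K * Real.cosh K * Real.tanh (K * x)) atBot
      (nhds (-(Real.sinh K * Real.cosh K))) := by
    have := htanh.const_mul (Real.sinh K * Real.cosh K)
    have h' : Real.sinh K * Real.cosh K * (-1) = -(Real.sinh K * Real.cosh K) := by ring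
    rwa [h'] at this
  have h2 : Tendsto (fun x : ℝ => Real.sinh K ^ 2 / 2 * (1 - Real.tanh (K * x) ^ 2)) atBot
      (nhds 0) := by
    have h3 : Tendsto (fun x : ℝ => 1 - Real.tanh (K * x) ^ 2) atBot (nhds 0) := by
      have := (tendsto_const_nhds (x := (1:ℝ)) (f := atBot (α := ℝ))).sub (htanh.pow 2)
      have h4 : (1:ℝ) - (-1) ^ 2 = 0 := by norm_num
      rwa [h4] at this
    have := h3.const_mul (Real.sinh K ^ 2 / 2)
    simpa using this
  have := (h1.add h2).add hq
  rw [add_zero] at this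
  exact this.congr fun x => by rw [PhiT]

private lemma hasSum_energy {c : ℝ} (hc : 1 < c) :
    HasSum (fun n : ℤ => (ptil c n) ^ 2 / 2 + V (rtil c n))
      (2 * Real.sinh (kappa c) * Real.cosh (kappa c) - 2 * kappa c) := by
  obtain ⟨hk, hsk⟩ := kappa_spec hc
  set K := kappa c
  set f : ℤ → ℝ := fun n => (ptil c n) ^ 2 / 2 + V (rtil c n) with hf
  set LT := Real.sinh K * Real.cosh K - K with hLT
  set LB := -(Real.sinh K * Real.cosh K) + K with hLB
  have h1 : HasSum (fun n : ℕ => f n) (LT - PhiT c (-1)) := by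
    rw [hasSum_iff_tendsto_nat_of_nonneg (fun i => summand_nonneg c _)]
    have hsum : ∀ N : ℕ, ∑ i ∈ Finset.range N, f i
        = PhiT c ((N : ℝ) - 1) - PhiT c (-1) := by
      intro N
      calc ∑ i ∈ Finset.range N, f i
          = ∑ i ∈ Finset.range N, (PhiT c (((i + 1 : ℕ) : ℝ) - 1) - PhiT c ((i : ℝ) - 1)) := by
            apply Finset.sum_congr rfl
            intro i _
            have h := summand_eq hc ((i : ℤ) : ℝ)
            rw [hf]
            simp only []
            push_cast at h ⊢
            rw [h]
            norm_num
        _ = PhiT c (((N : ℕ) : ℝ) - 1) - PhiT c (((0 : ℕ) : ℝ) - 1) :=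
            Finset.sum_range_sub (f := fun i : ℕ => PhiT c ((i : ℝ) - 1)) N
        _ = PhiT c ((N : ℝ) - 1) - PhiT c (-1) := by norm_num
    have htend : Tendsto (fun N : ℕ => PhiT c ((N : ℝ) - 1) - PhiT c (-1)) atTop
        (nhds (LT - PhiT c (-1))) := by
      have hN : Tendsto (fun N : ℕ => (N : ℝ) - 1) atTop atTop :=
        tendsto_atTop_add_const_right atTop (-1) tendsto_natCast_atTop_atTop
      exact ((tendsto_PhiT_atTop hc).comp hN).sub_const (PhiT c (-1))
    exact (tendsto_congr fun N => (hsum N).symm).mp htend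
  have h2 : HasSum (fun n : ℕ => f (-(n + 1))) (PhiT c (-1) - LB) := by
    rw [hasSum_iff_tendsto_nat_of_nonneg (fun i => summand_nonneg c _)]
    have hsum : ∀ N : ℕ, ∑ i ∈ Finset.range N, f (-(i + 1))
        = PhiT c (-1) - PhiT c (-1 - (N : ℝ)) := by
      intro N
      calc ∑ i ∈ Finset.range N, f (-(i + 1))
          = ∑ i ∈ Finset.range N, (PhiT c (-1 - (i : ℝ)) - PhiT c (-1 - ((i + 1 : ℕ) : ℝ))) := by
            apply Finset.sum_congr rfl
            intro i _
            have h := summand_eq hc ((-((i : ℤ) + 1) : ℤ) : ℝ)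
            rw [hf]
            simp only []
            push_cast at h ⊢
            rw [h]
            have e1 : -((i : ℝ) + 1) = -1 - (i : ℝ) := by ring
            rw [e1]
            have e2 : -1 - (i : ℝ) - 1 = -1 - ((i : ℝ) + 1) := by ring
            rw [e2]
        _ = PhiT c (-1 - ((0 : ℕ) : ℝ)) - PhiT c (-1 - ((N : ℕ) : ℝ)) :=
            Finset.sum_range_sub' (f := fun i : ℕ => PhiT c (-1 - (i : ℝ))) N
        _ = PhiT c (-1) - PhiT c (-1 - (N : ℝ)) := by norm_num
    have htend : Tendsto (fun N : ℕ => PhiT c (-1) - PhiT c (-1 - (N : ℝ))) atTop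
        (nhds (PhiT c (-1) - LB)) := by
      have hN : Tendsto (fun N : ℕ => -1 - (N : ℝ)) atTop atBot := by
        have h0 := tendsto_neg_atTop_atBot.comp (tendsto_natCast_atTop_atTop (R := ℝ))
        have h' := tendsto_atBot_add_const_left atTop (-1 : ℝ) h0
        refine h'.congr fun N => ?_
        simp [Function.comp, sub_eq_add_neg]
      have hc2 := (tendsto_PhiT_atBot hc).comp hN
      exact (tendsto_const_nhds (x := PhiT c (-1)) (f := atTop (α := ℕ))).sub hc2
    exact (tendsto_congr fun N => (hsum N).symm).mp htend
  have h3 := h1.of_nat_of_neg_add_one h2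
  have hval : (LT - PhiT c (-1)) + (PhiT c (-1) - LB)
      = 2 * Real.sinh K * Real.cosh K - 2 * K := by
    rw [hLT, hLB]; ring
  rwa [hval] at h3

private lemma solEnergy_eq {c : ℝ} (hc : 1 < c) :
    solEnergy c = 2 * Real.sinh (kappa c) * Real.cosh (kappa c) - 2 * kappa c :=
  (hasSum_energy hc).tsum_eq

/-- The closed-form energy `F(k) = 2 sinh k cosh k - 2k`. -/
private def FT (x : ℝ) : ℝ := 2 * Real.sinh x * Real.cosh x - 2 * x

private lemma hasDerivAt_FT (x : ℝ) :
    HasDerivAt FT (2 * (Real.cosh x ^ 2 + Real.sinh x ^ 2) - 2) x := by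
  have h := (((Real.hasDerivAt_sinh x).const_mul 2).mul (Real.hasDerivAt_cosh x)).sub
    ((hasDerivAt_id x).const_mul 2)
  convert h using 1 <;> try rfl
  ring

private lemma FT_deriv_pos {x : ℝ} (hx : 0 < x) :
    0 < 2 * (Real.cosh x ^ 2 + Real.sinh x ^ 2) - 2 := by
  have h1 := Real.cosh_sq x
  have h2 := Real.sinh_pos_iff.mpr hx
  nlinarith

private lemma FT_strictMonoOn : StrictMonoOn FT (Set.Ici 0) := by
  apply strictMonoOn_of_deriv_pos (convex_Ici 0)
  · exact (((continuous_const.mul Real.continuous_sinh).mul Real.continuous_cosh).sub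
      (continuous_const.mul continuous_id)).continuousOn
  · intro x hx
    rw [interior_Ici] at hx
    rw [(hasDerivAt_FT x).deriv]
    exact FT_deriv_pos hx

private lemma continuous_FT : Continuous FT :=
  ((continuous_const.mul Real.continuous_sinh).mul Real.continuous_cosh).sub
    (continuous_const.mul continuous_id)

private lemma continuousAt_kappa {c : ℝ} (hc : 1 < c) : ContinuousAt kappa c := by
  obtain ⟨hk, hsk⟩ := kappa_spec hc
  rw [Metric.continuousAt_iff]
  intro ε hε
  set K := kappa c with hKdef
  set ε' := min (ε / 2) (K / 2) with hε'
  have hε'pos : 0 < ε' := lt_min (by linarith) (by linarith)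
  have hε'le : ε' ≤ K / 2 := min_le_right _ _
  have hε'le2 : ε' ≤ ε / 2 := min_le_left _ _
  have ha : 0 < K - ε' := by linarith
  have hb : 0 < K + ε' := by linarith
  have h1 : phiT (K - ε') < c := by
    rw [← phiT_kappa hc]
    exact phiT_strictMonoOn ha hk (by linarith)
  have h2 : c < phiT (K + ε') := by
    rw [← phiT_kappa hc]
    exact phiT_strictMonoOn hk hb (by linarith)
  refine ⟨min (c - phiT (K - ε')) (phiT (K + ε') - c),
    lt_min (by linarith) (by linarith), fun {y} hy => ?_⟩
  rw [Real.dist_eq] at hy ⊢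
  have hy' := abs_lt.mp hy
  have hmin1 := min_le_left (c - phiT (K - ε')) (phiT (K + ε') - c)
  have hmin2 := min_le_right (c - phiT (K - ε')) (phiT (K + ε') - c)
  have hy1 : phiT (K - ε') < y := by linarith
  have hy2 : y < phiT (K + ε') := by linarith
  have hygt1 : 1 < y := lt_trans (one_lt_phiT ha) hy1
  obtain ⟨hky, _⟩ := kappa_spec hygt1
  have hyk : phiT (kappa y) = y := phiT_kappa hygt1
  have l1 : K - ε' < kappa y := by
    by_contra h
    push_neg at h
    have hle : phiT (kappa y) ≤ phiT (K - ε') := by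
      rcases eq_or_lt_of_le h with h' | h'
      · rw [h']
      · exact (phiT_strictMonoOn hky ha h').le
    rw [hyk] at hle
    linarith
  have l2 : kappa y < K + ε' := by
    by_contra h
    push_neg at h
    have hle : phiT (K + ε') ≤ phiT (kappa y) := by
      rcases eq_or_lt_of_le h with h' | h'
      · rw [h']
      · exact (phiT_strictMonoOn hb hky h').le
    rw [hyk] at hle
    linarith
  rw [abs_lt]
  constructor <;> linarith

private lemma hasDerivAt_kappa {c : ℝ} (hc : 1 < c) :
    HasDerivAt kappa
      (((Real.cosh (kappa c) * kappa c - Real.sinh (kappa c)) / kappa c ^ 2)⁻¹) c := by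
  obtain ⟨hk, _⟩ := kappa_spec hc
  apply HasDerivAt.of_local_left_inverse (continuousAt_kappa hc) (phiT_hasDerivAt hk)
  · have h1 := sinh_lt_mul_cosh hk
    have h2 : (0:ℝ) < kappa c ^ 2 := pow_pos hk 2
    exact ne_of_gt (div_pos (by nlinarith) h2)
  · filter_upwards [Ioi_mem_nhds hc] with y hy
    exact phiT_kappa hy

/-- Monotonicity and vanishing limit of the soliton energy. -/
theorem soliton_energy_monotone :
    (∀ c : ℝ, 1 < c → Summable fun n : ℤ => ((ptil c n) ^ 2 / 2 + V (rtil c n))) ∧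
    StrictMonoOn solEnergy (Set.Ioi (1:ℝ)) ∧
    (∀ c : ℝ, 1 < c → ∃ E' : ℝ, HasDerivAt solEnergy E' c ∧ 0 < E') ∧
    Tendsto solEnergy (nhdsWithin 1 (Set.Ioi (1:ℝ))) (nhds 0) := by
  refine ⟨fun c hc => (hasSum_energy hc).summable, ?_, ?_, ?_⟩
  · intro a ha b hb hab
    rw [Set.mem_Ioi] at ha hb
    rw [solEnergy_eq ha, solEnergy_eq hb]
    have h1 : FT (kappa a) < FT (kappa b) :=
      FT_strictMonoOn (Set.mem_Ici.mpr (kappa_spec ha).1.le)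
        (Set.mem_Ici.mpr (kappa_spec hb).1.le) (kappa_lt_kappa ha hab)
    simpa [FT] using h1
  · intro c hc
    obtain ⟨hk, _⟩ := kappa_spec hc
    have hF := hasDerivAt_FT (kappa c)
    have hκ := hasDerivAt_kappa hc
    have hcomp := hF.comp c hκ
    have heq : solEnergy =ᶠ[nhds c] (FT ∘ kappa) := by
      filter_upwards [Ioi_mem_nhds hc] with y hy
      rw [Function.comp, FT, solEnergy_eq hy]
    refine ⟨_, hcomp.congr_of_eventuallyEq heq, ?_⟩
    have hpos1 : 0 < 2 * (Real.cosh (kappa c) ^ 2 + Real.sinh (kappa c) ^ 2) - 2 :=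
      FT_deriv_pos hk
    have hpos2 : 0 < ((Real.cosh (kappa c) * kappa c - Real.sinh (kappa c)) / kappa c ^ 2)⁻¹ := by
      have h1 := sinh_lt_mul_cosh hk
      have h2 : (0:ℝ) < kappa c ^ 2 := pow_pos hk 2
      exact inv_pos.mpr (div_pos (by nlinarith) h2)
    exact mul_pos hpos1 hpos2
  · have hκ0 : Tendsto kappa (nhdsWithin 1 (Set.Ioi (1:ℝ))) (nhds 0) := by
      rw [tendsto_order]
      constructor
      · intro a ha
        filter_upwards [self_mem_nhdsWithin] with y hy
        exact ha.trans (kappa_spec hy).1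
      · intro b hb
        have h1 : (1:ℝ) < phiT b := one_lt_phiT hb
        filter_upwards [Ioo_mem_nhdsGT h1] with y hy
        obtain ⟨hky, _⟩ := kappa_spec hy.1
        by_contra hby
        push_neg at hby
        have hle : phiT b ≤ phiT (kappa y) := by
          rcases eq_or_lt_of_le hby with h' | h'
          · rw [h']
          · exact (phiT_strictMonoOn hb hky h').le
        rw [phiT_kappa hy.1] at hle
        linarith [hy.2]
    have hFcomp : Tendsto (FT ∘ kappa) (nhdsWithin 1 (Set.Ioi (1:ℝ))) (nhds (FT 0)) :=
      (continuous_FT.continuousAt.tendsto).comp hκ0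
    have hF0 : FT 0 = 0 := by simp [FT]
    rw [hF0] at hFcomp
    refine hFcomp.congr' ?_
    filter_upwards [self_mem_nhdsWithin] with y hy
    rw [Function.comp, FT, solEnergy_eq hy]

end

end TodaPaper
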